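/- Let G be a finite graph (1-dimensional simplicial complex) and f a discrete Morse function on G with m₀ critical vertices and m₁ critical edges. Then m₀ ≥ b₀(G) and m₁ ≥ b₁(G), and b₀(G) − b₁(G) = m₀ − m₁, where b_i denotes the i-th Betti number of G. -/
import Mathlib


/-- A (flat) discrete Morse function on a graph `G`, given by its values `fv` on
vertices and `fe` on edges: it is monotone, and each value is attained at most
twice, with equal values only on an incident vertex-edge pair. -/
def IsDMF {V : Type*} (G : SimpleGraph V) (fv : V → ℝ) (fe : Sym2 V → ℝ) : Prop :=
  (∀ v : V, ∀ e ∈ G.edgeSet, v ∈ e → fv v ≤ fe e) ∧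
  Function.Injective fv ∧
  (∀ e ∈ G.edgeSet, ∀ e' ∈ G.edgeSet, fe e = fe e' → e = e') ∧
  (∀ v : V, ∀ e ∈ G.edgeSet, fv v = fe e → v ∈ e)

/-- A vertex is critical if no incident edge shares its value. -/
def IsCritVtx {V : Type*} (G : SimpleGraph V) (fv : V → ℝ) (fe : Sym2 V → ℝ)
    (v : V) : Prop :=
  ∀ e ∈ G.edgeSet, v ∈ e → fv v ≠ fe e

/-- An edge is critical if no endpoint shares its value. -/
def IsCritEdge {V : Type*} (G : SimpleGraph V) (fv : V → ℝ) (fe : Sym2 V → ℝ)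
    (e : Sym2 V) : Prop :=
  e ∈ G.edgeSet ∧ ∀ v ∈ e, fv v ≠ fe e

/-- A critical value is a value of a critical simplex. -/
def IsCritValue {V : Type*} (G : SimpleGraph V) (fv : V → ℝ) (fe : Sym2 V → ℝ)
    (x : ℝ) : Prop :=
  (∃ v : V, IsCritVtx G fv fe v ∧ fv v = x) ∨
  (∃ e : Sym2 V, IsCritEdge G fv fe e ∧ fe e = x)

/-- The graph of the level subcomplex at level `a` (edges of value ≤ a). -/
def levelGraph {V : Type*} (G : SimpleGraph V) (fe : Sym2 V → ℝ) (a : ℝ) :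
    SimpleGraph V :=
  SimpleGraph.fromEdgeSet {e | e ∈ G.edgeSet ∧ fe e ≤ a}

/-- The graph of the part of the filtration strictly below level `a`. -/
def levelGraphLt {V : Type*} (G : SimpleGraph V) (fe : Sym2 V → ℝ) (a : ℝ) :
    SimpleGraph V :=
  SimpleGraph.fromEdgeSet {e | e ∈ G.edgeSet ∧ fe e < a}

/-- The homology class born at the critical vertex `v` dies at the critical edge
`e`: just below level `f(e)`, `e` joins two distinct components, `v` is the
minimum-value vertex of its component, and the other component contains a vertex
of strictly smaller value. -/
def Dies {V : Type*} (G : SimpleGraph V) (fv : V → ℝ) (fe : Sym2 V → ℝ)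
    (v : V) (e : Sym2 V) : Prop :=
  ∃ a b : V, e = s(a, b) ∧
    ¬ (levelGraphLt G fe (fe e)).Reachable a b ∧
    (levelGraphLt G fe (fe e)).Reachable a v ∧
    (∀ x : V, (levelGraphLt G fe (fe e)).Reachable a x → fv v ≤ fv x) ∧
    (∃ u : V, (levelGraphLt G fe (fe e)).Reachable b u ∧ fv u < fv v)

/-- The finite part of the degree-0 persistence diagram: pairs (birth, death). -/
def D0fin {V : Type*} (G : SimpleGraph V) (fv : V → ℝ) (fe : Sym2 V → ℝ) :
    Set (ℝ × ℝ) :=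
  {p | ∃ (v : V) (e : Sym2 V), IsCritVtx G fv fe v ∧ IsCritEdge G fv fe e ∧
    fv v = p.1 ∧ fe e = p.2 ∧ Dies G fv fe v e}

/-- Birth times of essential degree-0 classes (components that never die). -/
def D0inf {V : Type*} (G : SimpleGraph V) (fv : V → ℝ) (fe : Sym2 V → ℝ) :
    Set ℝ :=
  {x | ∃ v : V, IsCritVtx G fv fe v ∧ fv v = x ∧ ∀ e : Sym2 V, ¬ Dies G fv fe v e}

/-- Birth times of degree-1 classes: critical edges that do not merge components. -/
def D1birth {V : Type*} (G : SimpleGraph V) (fv : V → ℝ) (fe : Sym2 V → ℝ) :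
    Set ℝ :=
  {x | ∃ e : Sym2 V, IsCritEdge G fv fe e ∧ fe e = x ∧ ¬ ∃ v : V, Dies G fv fe v e}

/-- b₀ of the level subcomplex at `a`: components of the level graph containing a
vertex of value ≤ a. -/
noncomputable def levelB0 {V : Type*} (G : SimpleGraph V) (fv : V → ℝ)
    (fe : Sym2 V → ℝ) (a : ℝ) : ℕ :=
  {C : (levelGraph G fe a).ConnectedComponent |
    ∃ u : V, fv u ≤ a ∧ (levelGraph G fe a).connectedComponentMk u = C}.ncard

/-- b₁ of the level subcomplex at `a`, via the Euler characteristic. -/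
noncomputable def levelB1 {V : Type*} (G : SimpleGraph V) (fv : V → ℝ)
    (fe : Sym2 V → ℝ) (a : ℝ) : ℤ :=
  ({e : Sym2 V | e ∈ G.edgeSet ∧ fe e ≤ a}.ncard : ℤ) -
    ({u : V | fv u ≤ a}.ncard : ℤ) + (levelB0 G fv fe a : ℤ)

/-- Weak discrete Morse inequalities for graphs: m₀ ≥ b₀, m₁ ≥ b₁,
and b₀ - b₁ = m₀ - m₁. -/
theorem stmt_7 {V : Type*} [Fintype V] [DecidableEq V] (G : SimpleGraph V)
    [DecidableRel G.Adj] (fv : V → ℝ) (fe : Sym2 V → ℝ) (hf : IsDMF G fv fe)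
    (m0 m1 b0 : ℕ) (b1 : ℤ)
    (hm0 : m0 = {v : V | IsCritVtx G fv fe v}.ncard)
    (hm1 : m1 = {e : Sym2 V | IsCritEdge G fv fe e}.ncard)
    (hb0 : b0 = Nat.card G.ConnectedComponent)
    (hb1 : b1 = (G.edgeFinset.card : ℤ) - (Fintype.card V : ℤ) + (b0 : ℤ)) :
    b0 ≤ m0 ∧ b1 ≤ (m1 : ℤ) ∧ (b0 : ℤ) - b1 = (m0 : ℤ) - (m1 : ℤ) := by
  classical
  obtain ⟨hmono, hinjv, hinje, hincid⟩ := hf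
  -- each component has a minimum-value vertex
  have hmin : ∀ C : G.ConnectedComponent, ∃ v : V,
      G.connectedComponentMk v = C ∧ ∀ w, G.connectedComponentMk w = C → fv v ≤ fv w := by
    intro C
    obtain ⟨v0, hv0⟩ := C.exists_rep
    obtain ⟨v, hv, hvmin⟩ := Finset.exists_min_image
      (Finset.univ.filter (fun w => G.connectedComponentMk w = C)) fv ⟨v0, by simp; exact hv0⟩
    exact ⟨v, (Finset.mem_filter.mp hv).2, fun w hw => hvmin w (by simp [hw])⟩
  choose mn hmn1 hmn2 using hmin
  have hcrit : ∀ C, IsCritVtx G fv fe (mn C) := by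
    intro C e he hve heq
    set w := Sym2.Mem.other hve with hw
    have hsw : s(mn C, w) = e := Sym2.other_spec hve
    have hadj : G.Adj (mn C) w := by
      rw [← SimpleGraph.mem_edgeSet, hsw]; exact he
    have hwC : G.connectedComponentMk w = C := by
      rw [← hmn1 C]; exact (SimpleGraph.ConnectedComponent.sound hadj.reachable).symm
    have h1 : fv w ≤ fe e := hmono w e he (by rw [← hsw]; exact Sym2.mem_mk_right _ _)
    have h2 : fv (mn C) ≤ fv w := hmn2 C w hwC
    have : fv (mn C) = fv w := le_antisymm h2 (heq ▸ h1)
    exact hadj.ne (hinjv this)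
  have hmninj : Function.Injective mn := by
    intro C C' h
    rw [← hmn1 C, ← hmn1 C', h]
  -- b0 ≤ m0
  have key1 : b0 ≤ m0 := by
    have hinj2 : Function.Injective
        (fun C : G.ConnectedComponent => (⟨mn C, hcrit C⟩ : {v : V | IsCritVtx G fv fe v})) := by
      intro C C' h
      exact hmninj (congrArg Subtype.val h)
    have h1 : Nat.card G.ConnectedComponent ≤ Nat.card {v : V | IsCritVtx G fv fe v} :=
      Nat.card_le_card_of_injective _ hinj2
    rw [Nat.card_coe_set_eq] at h1
    rw [hb0, hm0]; exact h1
  -- the matching between non-critical vertices and non-critical edges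
  set Nv : Set V := {v : V | ¬ IsCritVtx G fv fe v} with hNv
  set Ne : Set (Sym2 V) := G.edgeSet \ {e : Sym2 V | IsCritEdge G fv fe e} with hNe
  set f : V → Sym2 V := fun v =>
    if h : ∃ e, e ∈ G.edgeSet ∧ v ∈ e ∧ fv v = fe e then h.choose else s(v, v) with hfdef
  have hfspec : ∀ v ∈ Nv, f v ∈ G.edgeSet ∧ v ∈ f v ∧ fv v = fe (f v) := by
    intro v hv
    have h : ∃ e, e ∈ G.edgeSet ∧ v ∈ e ∧ fv v = fe e := by
      by_contra hc
      push_neg at hc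
      exact hv (fun e he hve => hc e he hve)
    simpa [hfdef, dif_pos h] using h.choose_spec
  have hinjOn : Set.InjOn f Nv := by
    intro v hv v' hv' h
    have h1 := hfspec v hv
    have h2 := hfspec v' hv'
    apply hinjv
    rw [h1.2.2, h2.2.2, h]
  have himg : f '' Nv = Ne := by
    ext e
    constructor
    · rintro ⟨v, hv, rfl⟩
      obtain ⟨he, hve, heq⟩ := hfspec v hv
      exact ⟨he, fun hce => hce.2 v hve heq⟩
    · rintro ⟨he, hce⟩
      have : ∃ v ∈ e, fv v = fe e := by
        by_contra hc
        push_neg at hc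
        exact hce ⟨he, fun v hv => hc v hv⟩
      obtain ⟨v, hv, heq⟩ := this
      have hvN : v ∈ Nv := fun hcv => hcv e he hv heq
      refine ⟨v, hvN, ?_⟩
      obtain ⟨he', _, heq'⟩ := hfspec v hvN
      exact hinje _ he' _ he (by rw [← heq', heq])
  have hcardeq : Nv.ncard = Ne.ncard := by
    rw [← himg, Set.ncard_image_of_injOn hinjOn]
  -- counting
  have hVcount : {v : V | IsCritVtx G fv fe v}.ncard + Nv.ncard = Fintype.card V := by
    have := Set.ncard_add_ncard_compl {v : V | IsCritVtx G fv fe v}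
    rw [Set.compl_setOf, Nat.card_eq_fintype_card] at this
    exact this
  have hsub : {e : Sym2 V | IsCritEdge G fv fe e} ⊆ G.edgeSet := fun e he => he.1
  have hEcount : Ne.ncard + {e : Sym2 V | IsCritEdge G fv fe e}.ncard = G.edgeFinset.card := by
    rw [hNe, Set.ncard_diff_add_ncard_of_subset hsub]
    rw [SimpleGraph.edgeFinset, Set.ncard_eq_toFinset_card']
  have key3 : (m0 : ℤ) - (m1 : ℤ) = (Fintype.card V : ℤ) - (G.edgeFinset.card : ℤ) := by
    rw [hm0, hm1]
    omega
  refine ⟨key1, ?_, ?_⟩ <;> omega
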